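/- Let h : ℝ² → ℝ be continuously differentiable with h > 0, let u, v, a, b : ℝ³ → ℝ be continuously differentiable functions of (x,y,ζ), and let ψ : ℝ³ → ℝ be continuously differentiable. Define u_m(x,y) = ∫₀¹ u(x,y,ζ) dζ and similarly v_m, a_m, b_m; define hω(x,y,ζ) = −∂_x[ h·∫₀^ζ (u − u_m) ds ] − ∂_y[ h·∫₀^ζ (v − v_m) ds ] and h𝒞(x,y,ζ) = −∂_x[ h·∫₀^ζ a ds ] − ∂_y[ h·∫₀^ζ b ds ]. Then for all (x,y): (i) ∫₀¹ ∂_ζ[ ψ·hω ](x,y,ζ) dζ = 0, and (ii) ∫₀¹ ∂_ζ[ ψ·h𝒞 ](x,y,ζ) dζ = −ψ(x,y,1)·[ ∂_x(h a_m) + ∂_y(h b_m) ](x,y). -/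

import Mathlib

open intervalIntegral

open MeasureTheory Metric Set Filter

/-- FTC: derivative in the upper endpoint, for continuous integrands. -/
lemma ftc_right' (g : ℝ → ℝ) (hg : Continuous g) (ζ : ℝ) :
    HasDerivAt (fun t => ∫ s in (0:ℝ)..t, g s) (g ζ) ζ :=
  intervalIntegral.integral_hasDerivAt_right (hg.intervalIntegrable 0 ζ)
    hg.aestronglyMeasurable.stronglyMeasurableAtFilter hg.continuousAt

/-- Differentiation under the interval integral, for continuous data. -/
lemma param_hasDerivAt (g g' : ℝ → ℝ → ℝ)
    (hg : Continuous fun p : ℝ × ℝ => g p.1 p.2)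
    (hg' : Continuous fun p : ℝ × ℝ => g' p.1 p.2)
    (hd : ∀ t s, HasDerivAt (fun t' => g t' s) (g' t s) t)
    (c x : ℝ) :
    HasDerivAt (fun t => ∫ s in (0:ℝ)..c, g t s)
      (∫ s in (0:ℝ)..c, g' x s) x := by
  obtain ⟨C, hC⟩ :
      ∃ C, ∀ p ∈ (closedBall x 1) ×ˢ (Set.uIcc (0:ℝ) c), ‖g' p.1 p.2‖ ≤ C :=
    ((isCompact_closedBall x 1).prod isCompact_uIcc).exists_bound_of_continuousOn
      hg'.continuousOn
  refine (intervalIntegral.hasDerivAt_integral_of_dominated_loc_of_deriv_le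
    (F := fun t s => g t s) (F' := fun t s => g' t s) (bound := fun _ => C)
    (ball_mem_nhds x zero_lt_one) ?_ ?_ ?_ ?_ ?_ ?_).2
  · exact Eventually.of_forall fun t =>
      (hg.comp (Continuous.prodMk_right t)).aestronglyMeasurable
  · exact (hg.comp (Continuous.prodMk_right x)).intervalIntegrable 0 c
  · exact (hg'.comp (Continuous.prodMk_right x)).aestronglyMeasurable
  · exact Eventually.of_forall fun t ht x' hx' =>
      hC (x', t) ⟨ball_subset_closedBall hx', Set.uIoc_subset_uIcc ht⟩
  · exact intervalIntegrable_const
  · exact Eventually.of_forall fun t ht x' _ => hd x' t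

lemma hasDerivAt_fst3 (f : ℝ × ℝ × ℝ → ℝ) (hf : ContDiff ℝ 1 f) (y s t : ℝ) :
    HasDerivAt (fun t' => f (t', y, s)) (fderiv ℝ f (t, y, s) (1, 0, 0)) t := by
  have h1 : HasDerivAt (fun t' : ℝ => (t', y, s)) ((1:ℝ), (0:ℝ), (0:ℝ)) t :=
    (hasDerivAt_id t).prodMk ((hasDerivAt_const t y).prodMk (hasDerivAt_const t s))
  exact ((hf.differentiable one_ne_zero (t, y, s)).hasFDerivAt).comp_hasDerivAt t h1

lemma hasDerivAt_snd3 (f : ℝ × ℝ × ℝ → ℝ) (hf : ContDiff ℝ 1 f) (x s t : ℝ) :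
    HasDerivAt (fun t' => f (x, t', s)) (fderiv ℝ f (x, t, s) (0, 1, 0)) t := by
  have h1 : HasDerivAt (fun t' : ℝ => (x, t', s)) ((0:ℝ), (1:ℝ), (0:ℝ)) t :=
    (hasDerivAt_const t x).prodMk ((hasDerivAt_id t).prodMk (hasDerivAt_const t s))
  exact ((hf.differentiable one_ne_zero (x, t, s)).hasFDerivAt).comp_hasDerivAt t h1

lemma hasDerivAt_trd3 (f : ℝ × ℝ × ℝ → ℝ) (hf : ContDiff ℝ 1 f) (x y t : ℝ) :
    HasDerivAt (fun t' => f (x, y, t')) (fderiv ℝ f (x, y, t) (0, 0, 1)) t := by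
  have h1 : HasDerivAt (fun t' : ℝ => (x, y, t')) ((0:ℝ), (0:ℝ), (1:ℝ)) t :=
    (hasDerivAt_const t x).prodMk ((hasDerivAt_const t y).prodMk (hasDerivAt_id t))
  exact ((hf.differentiable one_ne_zero (x, y, t)).hasFDerivAt).comp_hasDerivAt t h1

lemma hasDerivAt_fst2 (h : ℝ × ℝ → ℝ) (hh : ContDiff ℝ 1 h) (y t : ℝ) :
    HasDerivAt (fun t' => h (t', y)) (fderiv ℝ h (t, y) (1, 0)) t := by
  have h1 : HasDerivAt (fun t' : ℝ => (t', y)) ((1:ℝ), (0:ℝ)) t :=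
    (hasDerivAt_id t).prodMk (hasDerivAt_const t y)
  exact ((hh.differentiable one_ne_zero (t, y)).hasFDerivAt).comp_hasDerivAt t h1

lemma hasDerivAt_snd2 (h : ℝ × ℝ → ℝ) (hh : ContDiff ℝ 1 h) (x t : ℝ) :
    HasDerivAt (fun t' => h (x, t')) (fderiv ℝ h (x, t) (0, 1)) t := by
  have h1 : HasDerivAt (fun t' : ℝ => (x, t')) ((0:ℝ), (1:ℝ)) t :=
    (hasDerivAt_const t x).prodMk (hasDerivAt_id t)
  exact ((hh.differentiable one_ne_zero (x, t)).hasFDerivAt).comp_hasDerivAt t h1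

lemma cont_dfst3 (f : ℝ × ℝ × ℝ → ℝ) (hf : ContDiff ℝ 1 f) :
    Continuous fun p : ℝ × ℝ × ℝ => fderiv ℝ f p (1, 0, 0) :=
  (hf.continuous_fderiv one_ne_zero).clm_apply continuous_const

lemma cont_dsnd3 (f : ℝ × ℝ × ℝ → ℝ) (hf : ContDiff ℝ 1 f) :
    Continuous fun p : ℝ × ℝ × ℝ => fderiv ℝ f p (0, 1, 0) :=
  (hf.continuous_fderiv one_ne_zero).clm_apply continuous_const

/-- x-derivative of a parametric vertical integral. -/
lemma paramX (f : ℝ × ℝ × ℝ → ℝ) (hf : ContDiff ℝ 1 f) (y c x : ℝ) :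
    HasDerivAt (fun t => ∫ s in (0:ℝ)..c, f (t, y, s))
      (∫ s in (0:ℝ)..c, fderiv ℝ f (x, y, s) (1, 0, 0)) x := by
  refine param_hasDerivAt (fun t s => f (t, y, s))
    (fun t s => fderiv ℝ f (t, y, s) (1, 0, 0)) ?_ ?_
    (fun t s => hasDerivAt_fst3 f hf y s t) c x
  · exact hf.continuous.comp (by fun_prop)
  · exact (cont_dfst3 f hf).comp (by fun_prop)

/-- y-derivative of a parametric vertical integral. -/
lemma paramY (f : ℝ × ℝ × ℝ → ℝ) (hf : ContDiff ℝ 1 f) (x c y : ℝ) :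
    HasDerivAt (fun t => ∫ s in (0:ℝ)..c, f (x, t, s))
      (∫ s in (0:ℝ)..c, fderiv ℝ f (x, y, s) (0, 1, 0)) y := by
  refine param_hasDerivAt (fun t s => f (x, t, s))
    (fun t s => fderiv ℝ f (x, t, s) (0, 1, 0)) ?_ ?_
    (fun t s => hasDerivAt_snd3 f hf x s t) c y
  · exact hf.continuous.comp (by fun_prop)
  · exact (cont_dsnd3 f hf).comp (by fun_prop)


/-- The explicit ζ-profile of the vertical coupling operator. -/
noncomputable def Xfun (h : ℝ × ℝ → ℝ) (f g : ℝ × ℝ × ℝ → ℝ) (x y ε : ℝ) : ℝ → ℝ :=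
  fun ζ =>
    -(fderiv ℝ h (x, y) (1, 0) *
        ((∫ s in (0:ℝ)..ζ, f (x, y, s)) - ε * (ζ * ∫ s in (0:ℝ)..1, f (x, y, s)))
      + h (x, y) *
        ((∫ s in (0:ℝ)..ζ, fderiv ℝ f (x, y, s) (1, 0, 0))
          - ε * (ζ * ∫ s in (0:ℝ)..1, fderiv ℝ f (x, y, s) (1, 0, 0))))
    - (fderiv ℝ h (x, y) (0, 1) *
        ((∫ s in (0:ℝ)..ζ, g (x, y, s)) - ε * (ζ * ∫ s in (0:ℝ)..1, g (x, y, s)))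
      + h (x, y) *
        ((∫ s in (0:ℝ)..ζ, fderiv ℝ g (x, y, s) (0, 1, 0))
          - ε * (ζ * ∫ s in (0:ℝ)..1, fderiv ℝ g (x, y, s) (0, 1, 0))))

/-- The ζ-derivative of `Xfun`. -/
noncomputable def Xfun' (h : ℝ × ℝ → ℝ) (f g : ℝ × ℝ × ℝ → ℝ) (x y ε : ℝ) : ℝ → ℝ :=
  fun ζ =>
    -(fderiv ℝ h (x, y) (1, 0) *
        (f (x, y, ζ) - ε * (1 * ∫ s in (0:ℝ)..1, f (x, y, s)))
      + h (x, y) *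
        (fderiv ℝ f (x, y, ζ) (1, 0, 0)
          - ε * (1 * ∫ s in (0:ℝ)..1, fderiv ℝ f (x, y, s) (1, 0, 0))))
    - (fderiv ℝ h (x, y) (0, 1) *
        (g (x, y, ζ) - ε * (1 * ∫ s in (0:ℝ)..1, g (x, y, s)))
      + h (x, y) *
        (fderiv ℝ g (x, y, ζ) (0, 1, 0)
          - ε * (1 * ∫ s in (0:ℝ)..1, fderiv ℝ g (x, y, s) (0, 1, 0))))

lemma core_integral (h : ℝ × ℝ → ℝ) (f g ψ : ℝ × ℝ × ℝ → ℝ)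
    (hC1 : ContDiff ℝ 1 h) (fC1 : ContDiff ℝ 1 f) (gC1 : ContDiff ℝ 1 g)
    (ψC1 : ContDiff ℝ 1 ψ) (x y ε : ℝ) :
    (∫ ζ in (0:ℝ)..1, deriv (fun ζ' => ψ (x, y, ζ') *
        (- deriv (fun x' => h (x', y) *
            ((∫ s in (0:ℝ)..ζ', f (x', y, s)) - ε * (ζ' * ∫ s in (0:ℝ)..1, f (x', y, s)))) x
         - deriv (fun y' => h (x, y') *
            ((∫ s in (0:ℝ)..ζ', g (x, y', s)) - ε * (ζ' * ∫ s in (0:ℝ)..1, g (x, y', s)))) y)) ζ)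
    = ψ (x, y, 1) * Xfun h f g x y ε 1 := by
  have cf := fC1.continuous
  have cg := gC1.continuous
  have cψ := ψC1.continuous
  have cfx := cont_dfst3 f fC1
  have cgy := cont_dsnd3 g gC1
  have cψz : Continuous fun p : ℝ × ℝ × ℝ => fderiv ℝ ψ p (0, 0, 1) :=
    (ψC1.continuous_fderiv one_ne_zero).clm_apply continuous_const
  have hhX : HasDerivAt (fun t => h (t, y)) (fderiv ℝ h (x, y) (1, 0)) x :=
    hasDerivAt_fst2 h hC1 y x
  have hhY : HasDerivAt (fun t => h (x, t)) (fderiv ℝ h (x, y) (0, 1)) y :=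
    hasDerivAt_snd2 h hC1 x y
  have hXeq : ∀ ζ : ℝ,
      (- deriv (fun x' => h (x', y) *
            ((∫ s in (0:ℝ)..ζ, f (x', y, s)) - ε * (ζ * ∫ s in (0:ℝ)..1, f (x', y, s)))) x
       - deriv (fun y' => h (x, y') *
            ((∫ s in (0:ℝ)..ζ, g (x, y', s)) - ε * (ζ * ∫ s in (0:ℝ)..1, g (x, y', s)))) y)
      = Xfun h f g x y ε ζ := by
    intro ζ
    have d1 : HasDerivAt (fun x' => h (x', y) *
          ((∫ s in (0:ℝ)..ζ, f (x', y, s)) - ε * (ζ * ∫ s in (0:ℝ)..1, f (x', y, s))))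
        (fderiv ℝ h (x, y) (1, 0) *
            ((∫ s in (0:ℝ)..ζ, f (x, y, s)) - ε * (ζ * ∫ s in (0:ℝ)..1, f (x, y, s)))
          + h (x, y) *
            ((∫ s in (0:ℝ)..ζ, fderiv ℝ f (x, y, s) (1, 0, 0))
              - ε * (ζ * ∫ s in (0:ℝ)..1, fderiv ℝ f (x, y, s) (1, 0, 0)))) x :=
      hhX.mul ((paramX f fC1 y ζ x).sub (((paramX f fC1 y 1 x).const_mul ζ).const_mul ε))
    have d2 : HasDerivAt (fun y' => h (x, y') *
          ((∫ s in (0:ℝ)..ζ, g (x, y', s)) - ε * (ζ * ∫ s in (0:ℝ)..1, g (x, y', s))))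
        (fderiv ℝ h (x, y) (0, 1) *
            ((∫ s in (0:ℝ)..ζ, g (x, y, s)) - ε * (ζ * ∫ s in (0:ℝ)..1, g (x, y, s)))
          + h (x, y) *
            ((∫ s in (0:ℝ)..ζ, fderiv ℝ g (x, y, s) (0, 1, 0))
              - ε * (ζ * ∫ s in (0:ℝ)..1, fderiv ℝ g (x, y, s) (0, 1, 0)))) y :=
      hhY.mul ((paramY g gC1 x ζ y).sub (((paramY g gC1 x 1 y).const_mul ζ).const_mul ε))
    rw [d1.deriv, d2.deriv]
    simp only [Xfun]
  have hXd : ∀ ζ, HasDerivAt (Xfun h f g x y ε) (Xfun' h f g x y ε ζ) ζ := by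
    intro ζ
    have e1 : HasDerivAt (fun c => ∫ s in (0:ℝ)..c, f (x, y, s)) (f (x, y, ζ)) ζ :=
      ftc_right' _ (by fun_prop) ζ
    have e2 : HasDerivAt (fun c => ∫ s in (0:ℝ)..c, fderiv ℝ f (x, y, s) (1, 0, 0))
        (fderiv ℝ f (x, y, ζ) (1, 0, 0)) ζ := ftc_right' _ (by fun_prop) ζ
    have e3 : HasDerivAt (fun c => ∫ s in (0:ℝ)..c, g (x, y, s)) (g (x, y, ζ)) ζ :=
      ftc_right' _ (by fun_prop) ζ
    have e4 : HasDerivAt (fun c => ∫ s in (0:ℝ)..c, fderiv ℝ g (x, y, s) (0, 1, 0))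
        (fderiv ℝ g (x, y, ζ) (0, 1, 0)) ζ := ftc_right' _ (by fun_prop) ζ
    have l1 : HasDerivAt (fun c : ℝ => ε * (c * ∫ s in (0:ℝ)..1, f (x, y, s)))
        (ε * (1 * ∫ s in (0:ℝ)..1, f (x, y, s))) ζ :=
      ((hasDerivAt_id' ζ).mul_const _).const_mul ε
    have l2 : HasDerivAt (fun c : ℝ => ε * (c * ∫ s in (0:ℝ)..1, fderiv ℝ f (x, y, s) (1, 0, 0)))
        (ε * (1 * ∫ s in (0:ℝ)..1, fderiv ℝ f (x, y, s) (1, 0, 0))) ζ :=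
      ((hasDerivAt_id' ζ).mul_const _).const_mul ε
    have l3 : HasDerivAt (fun c : ℝ => ε * (c * ∫ s in (0:ℝ)..1, g (x, y, s)))
        (ε * (1 * ∫ s in (0:ℝ)..1, g (x, y, s))) ζ :=
      ((hasDerivAt_id' ζ).mul_const _).const_mul ε
    have l4 : HasDerivAt (fun c : ℝ => ε * (c * ∫ s in (0:ℝ)..1, fderiv ℝ g (x, y, s) (0, 1, 0)))
        (ε * (1 * ∫ s in (0:ℝ)..1, fderiv ℝ g (x, y, s) (0, 1, 0))) ζ :=
      ((hasDerivAt_id' ζ).mul_const _).const_mul ε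
    exact (((e1.sub l1).const_mul _).add ((e2.sub l2).const_mul _)).neg.sub
      (((e3.sub l3).const_mul _).add ((e4.sub l4).const_mul _))
  have hXcont : Continuous (Xfun h f g x y ε) :=
    continuous_iff_continuousAt.2 fun ζ => (hXd ζ).continuousAt
  have hX'cont : Continuous (Xfun' h f g x y ε) := by
    unfold Xfun'; fun_prop
  set F : ℝ → ℝ := fun ζ => ψ (x, y, ζ) * Xfun h f g x y ε ζ with Fdef
  set F' : ℝ → ℝ := fun ζ =>
    fderiv ℝ ψ (x, y, ζ) (0, 0, 1) * Xfun h f g x y ε ζ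
      + ψ (x, y, ζ) * Xfun' h f g x y ε ζ with F'def
  have hF : ∀ ζ, HasDerivAt F (F' ζ) ζ := fun ζ =>
    (hasDerivAt_trd3 ψ ψC1 x y ζ).mul (hXd ζ)
  have hF'c : Continuous F' := by rw [F'def]; fun_prop
  have hfe : (fun ζ' => ψ (x, y, ζ') *
        (- deriv (fun x' => h (x', y) *
            ((∫ s in (0:ℝ)..ζ', f (x', y, s)) - ε * (ζ' * ∫ s in (0:ℝ)..1, f (x', y, s)))) x
         - deriv (fun y' => h (x, y') *
            ((∫ s in (0:ℝ)..ζ', g (x, y', s)) - ε * (ζ' * ∫ s in (0:ℝ)..1, g (x, y', s)))) y)) = F :=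
    funext fun ζ' => by rw [hXeq ζ']
  rw [hfe, intervalIntegral.integral_congr (g := F') (fun ζ _ => (hF ζ).deriv),
    intervalIntegral.integral_eq_sub_of_hasDerivAt (fun ζ _ => hF ζ)
      (hF'c.intervalIntegrable 0 1)]
  have hX0 : Xfun h f g x y ε 0 = 0 := by
    simp [Xfun, intervalIntegral.integral_same]
  simp only [Fdef, hX0, mul_zero, sub_zero]

/-- The depth average of a function of `(x,y,ζ)` over `ζ ∈ [0,1]`. -/
noncomputable def depthMean (u : ℝ × ℝ × ℝ → ℝ) (x y : ℝ) : ℝ :=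
  ∫ ζ in (0 : ℝ)..1, u (x, y, ζ)

/-- The velocity vertical coupling operator `hω`:
`hω(x,y,ζ) = −∂_x[h·∫₀^ζ (u − u_m) ds] − ∂_y[h·∫₀^ζ (v − v_m) ds]`. -/
noncomputable def hOmega (h : ℝ × ℝ → ℝ) (u v : ℝ × ℝ × ℝ → ℝ)
    (x y ζ : ℝ) : ℝ :=
  - deriv (fun x' =>
      h (x', y) * ∫ s in (0 : ℝ)..ζ, (u (x', y, s) - depthMean u x' y)) x
  - deriv (fun y' =>
      h (x, y') * ∫ s in (0 : ℝ)..ζ, (v (x, y', s) - depthMean v x y')) y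

/-- The magnetic vertical coupling operator `h𝒞`:
`h𝒞(x,y,ζ) = −∂_x[h·∫₀^ζ a ds] − ∂_y[h·∫₀^ζ b ds]`. -/
noncomputable def hMagC (h : ℝ × ℝ → ℝ) (a b : ℝ × ℝ × ℝ → ℝ)
    (x y ζ : ℝ) : ℝ :=
  - deriv (fun x' => h (x', y) * ∫ s in (0 : ℝ)..ζ, a (x', y, s)) x
  - deriv (fun y' => h (x, y') * ∫ s in (0 : ℝ)..ζ, b (x, y', s)) y

/-- Depth integrals of vertical-coupling flux terms:
(i) `∫₀¹ ∂_ζ(ψ·hω) dζ = 0`; and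
(ii) `∫₀¹ ∂_ζ(ψ·h𝒞) dζ = −ψ|_{ζ=1}·(∂_x(h a_m) + ∂_y(h b_m))`
(the Godunov–Powell-type source term). -/
theorem vertical_coupling_depth_integrals
    (h : ℝ × ℝ → ℝ) (u v a b ψ : ℝ × ℝ × ℝ → ℝ)
    (hC1 : ContDiff ℝ 1 h) (hpos : ∀ p : ℝ × ℝ, 0 < h p)
    (uC1 : ContDiff ℝ 1 u) (vC1 : ContDiff ℝ 1 v)
    (aC1 : ContDiff ℝ 1 a) (bC1 : ContDiff ℝ 1 b)
    (ψC1 : ContDiff ℝ 1 ψ) :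
    ∀ x y : ℝ,
      (∫ ζ in (0 : ℝ)..1,
          deriv (fun ζ' => ψ (x, y, ζ') * hOmega h u v x y ζ') ζ) = 0
      ∧
      (∫ ζ in (0 : ℝ)..1,
          deriv (fun ζ' => ψ (x, y, ζ') * hMagC h a b x y ζ') ζ)
        = - ψ (x, y, 1) *
            (deriv (fun x' => h (x', y) * depthMean a x' y) x
              + deriv (fun y' => h (x, y') * depthMean b x y') y) := by
  intro x y
  have hhX : HasDerivAt (fun t => h (t, y)) (fderiv ℝ h (x, y) (1, 0)) x :=
    hasDerivAt_fst2 h hC1 y x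
  have hhY : HasDerivAt (fun t => h (x, t)) (fderiv ℝ h (x, y) (0, 1)) y :=
    hasDerivAt_snd2 h hC1 x y
  constructor
  · have hfeq : (fun ζ' => ψ (x, y, ζ') * hOmega h u v x y ζ') =
        (fun ζ' => ψ (x, y, ζ') *
          (- deriv (fun x' => h (x', y) *
              ((∫ s in (0:ℝ)..ζ', u (x', y, s)) - 1 * (ζ' * ∫ s in (0:ℝ)..1, u (x', y, s)))) x
           - deriv (fun y' => h (x, y') *
              ((∫ s in (0:ℝ)..ζ', v (x, y', s)) - 1 * (ζ' * ∫ s in (0:ℝ)..1, v (x, y', s)))) y)) := by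
      funext ζ'
      unfold hOmega
      rw [show (fun x' => h (x', y) * ∫ s in (0:ℝ)..ζ', (u (x', y, s) - depthMean u x' y))
            = (fun x' => h (x', y) *
              ((∫ s in (0:ℝ)..ζ', u (x', y, s)) - 1 * (ζ' * ∫ s in (0:ℝ)..1, u (x', y, s)))) from
          funext fun x' => by
            rw [intervalIntegral.integral_sub
                (Continuous.intervalIntegrable (by have := uC1.continuous; fun_prop : Continuous fun s : ℝ => u (x', y, s)) 0 ζ')
                intervalIntegrable_const, intervalIntegral.integral_const]
            simp only [depthMean, smul_eq_mul, sub_zero, one_mul],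
        show (fun y' => h (x, y') * ∫ s in (0:ℝ)..ζ', (v (x, y', s) - depthMean v x y'))
            = (fun y' => h (x, y') *
              ((∫ s in (0:ℝ)..ζ', v (x, y', s)) - 1 * (ζ' * ∫ s in (0:ℝ)..1, v (x, y', s)))) from
          funext fun y' => by
            rw [intervalIntegral.integral_sub
                (Continuous.intervalIntegrable (by have := vC1.continuous; fun_prop : Continuous fun s : ℝ => v (x, y', s)) 0 ζ')
                intervalIntegrable_const, intervalIntegral.integral_const]
            simp only [depthMean, smul_eq_mul, sub_zero, one_mul]]
    rw [hfeq, core_integral h u v ψ hC1 uC1 vC1 ψC1 x y 1]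
    simp only [Xfun, one_mul, sub_self, mul_zero, add_zero, neg_zero, sub_zero]
  · have hfeq : (fun ζ' => ψ (x, y, ζ') * hMagC h a b x y ζ') =
        (fun ζ' => ψ (x, y, ζ') *
          (- deriv (fun x' => h (x', y) *
              ((∫ s in (0:ℝ)..ζ', a (x', y, s)) - 0 * (ζ' * ∫ s in (0:ℝ)..1, a (x', y, s)))) x
           - deriv (fun y' => h (x, y') *
              ((∫ s in (0:ℝ)..ζ', b (x, y', s)) - 0 * (ζ' * ∫ s in (0:ℝ)..1, b (x, y', s)))) y)) := by
      funext ζ'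
      unfold hMagC
      rw [show (fun x' => h (x', y) * ∫ s in (0:ℝ)..ζ', a (x', y, s))
            = (fun x' => h (x', y) *
              ((∫ s in (0:ℝ)..ζ', a (x', y, s)) - 0 * (ζ' * ∫ s in (0:ℝ)..1, a (x', y, s)))) from
          funext fun x' => by ring,
        show (fun y' => h (x, y') * ∫ s in (0:ℝ)..ζ', b (x, y', s))
            = (fun y' => h (x, y') *
              ((∫ s in (0:ℝ)..ζ', b (x, y', s)) - 0 * (ζ' * ∫ s in (0:ℝ)..1, b (x, y', s)))) from
          funext fun y' => by ring]
    rw [hfeq, core_integral h a b ψ hC1 aC1 bC1 ψC1 x y 0,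
      show deriv (fun x' => h (x', y) * depthMean a x' y) x
          = fderiv ℝ h (x, y) (1, 0) * (∫ s in (0:ℝ)..1, a (x, y, s))
            + h (x, y) * ∫ s in (0:ℝ)..1, fderiv ℝ a (x, y, s) (1, 0, 0) from
        (hhX.mul (paramX a aC1 y 1 x)).deriv,
      show deriv (fun y' => h (x, y') * depthMean b x y') y
          = fderiv ℝ h (x, y) (0, 1) * (∫ s in (0:ℝ)..1, b (x, y, s))
            + h (x, y) * ∫ s in (0:ℝ)..1, fderiv ℝ b (x, y, s) (0, 1, 0) from
        (hhY.mul (paramY b bC1 x 1 y)).deriv]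
    simp only [Xfun]
    ring
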